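/- arXiv:2602.19782 — 2 statements merged into one kernel-verified Lean document; each statement's English description precedes it below -/
import Mathlib

section
/- Let W be an ℝ^p-valued and V an ℝ^q-valued square-integrable random vector on a probability space, with Cov(W_i, V_j) = 0 for all i, j, and suppose the covariance matrix Σ_W of W is positive definite. Let B_W ∈ ℝ^{p̂×p} have full column rank p, and let B_C ∈ ℝ^{q̂×p}, B_V ∈ ℝ^{q̂×q}, c₁ ∈ ℝ^{p̂}, c₂ ∈ ℝ^{q̂}. Define Ŵ := B_W W + c₁ and V̂ := B_C W + B_V V + c₂. If Cov(Ŵ_i, V̂_j) = 0 for all i, j (in particular, if Ŵ and V̂ are independent and square-integrable), then B_C = 0 and hence V̂ = B_V V + c₂. -/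
open MeasureTheory

/-- The covariance `Cov(X, Y) = E[(X − E X)(Y − E Y)]` of two real random variables. -/
noncomputable def cov {Ω : Type*} [MeasurableSpace Ω] (μ : Measure Ω) (X Y : Ω → ℝ) : ℝ :=
  ∫ ω, (X ω - ∫ x, X x ∂μ) * (Y ω - ∫ x, Y x ∂μ) ∂μ

lemma integrable_mul_of_memℒp_two {Ω : Type*} [MeasurableSpace Ω] {μ : Measure Ω} {f g : Ω → ℝ}
    (hf : MemLp f 2 μ) (hg : MemLp g 2 μ) : Integrable (fun x => f x * g x) μ := by
  have h : MemLp (g • f) 1 μ :=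
    hf.smul hg
  have := memLp_one_iff_integrable.mp h
  exact (by simpa [smul_eq_mul, mul_comm] using this : Integrable (f * g) μ)

lemma cov_linear {Ω : Type*} [MeasurableSpace Ω] (μ : Measure Ω) [IsProbabilityMeasure μ]
    {ι κ : Type*} [Fintype ι] [Fintype κ]
    (X : ι → Ω → ℝ) (Y : κ → Ω → ℝ)
    (hX : ∀ i, MemLp (X i) 2 μ) (hY : ∀ j, MemLp (Y j) 2 μ)
    (a : ι → ℝ) (b : κ → ℝ) (c d : ℝ) :
    cov μ (fun ω => (∑ i, a i * X i ω) + c) (fun ω => (∑ j, b j * Y j ω) + d)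
      = ∑ i, ∑ j, a i * b j * cov μ (X i) (Y j) := by
  have hXi : ∀ i, Integrable (X i) μ := fun i => (hX i).integrable one_le_two
  have hYj : ∀ j, Integrable (Y j) μ := fun j => (hY j).integrable one_le_two
  have hXc : ∀ i, MemLp (fun ω => X i ω - ∫ x, X i x ∂μ) 2 μ := fun i =>
    (hX i).sub (memLp_const _)
  have hYc : ∀ j, MemLp (fun ω => Y j ω - ∫ x, Y j x ∂μ) 2 μ := fun j =>
    (hY j).sub (memLp_const _)
  have hmX : (∫ ω, ((∑ i, a i * X i ω) + c) ∂μ) = (∑ i, a i * ∫ x, X i x ∂μ) + c := by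
    rw [integral_add (integrable_finset_sum _ fun i _ => (hXi i).const_mul _)
      (integrable_const c), integral_finset_sum _ fun i _ => (hXi i).const_mul _]
    simp [integral_const_mul]
  have hmY : (∫ ω, ((∑ j, b j * Y j ω) + d) ∂μ) = (∑ j, b j * ∫ x, Y j x ∂μ) + d := by
    rw [integral_add (integrable_finset_sum _ fun j _ => (hYj j).const_mul _)
      (integrable_const d), integral_finset_sum _ fun j _ => (hYj j).const_mul _]
    simp [integral_const_mul]
  unfold cov
  rw [hmX, hmY]
  have hrw : ∀ ω, (((∑ i, a i * X i ω) + c) - ((∑ i, a i * ∫ x, X i x ∂μ) + c))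
      * (((∑ j, b j * Y j ω) + d) - ((∑ j, b j * ∫ x, Y j x ∂μ) + d))
      = ∑ i, ∑ j, a i * b j *
        ((X i ω - ∫ x, X i x ∂μ) * (Y j ω - ∫ x, Y j x ∂μ)) := by
    intro ω
    have h1 : ((∑ i, a i * X i ω) + c) - ((∑ i, a i * ∫ x, X i x ∂μ) + c)
        = ∑ i, a i * (X i ω - ∫ x, X i x ∂μ) := by
      rw [Finset.sum_congr rfl (fun i _ => mul_sub (a i) _ _), Finset.sum_sub_distrib]
      ring
    have h2 : ((∑ j, b j * Y j ω) + d) - ((∑ j, b j * ∫ x, Y j x ∂μ) + d)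
        = ∑ j, b j * (Y j ω - ∫ x, Y j x ∂μ) := by
      rw [Finset.sum_congr rfl (fun j _ => mul_sub (b j) _ _), Finset.sum_sub_distrib]
      ring
    rw [h1, h2, Finset.sum_mul_sum]
    exact Finset.sum_congr rfl fun i _ => Finset.sum_congr rfl fun j _ => by ring
  simp_rw [hrw]
  rw [integral_finset_sum _ fun i _ => integrable_finset_sum _ fun j _ =>
    ((integrable_mul_of_memℒp_two (hXc i) (hYc j)).const_mul _)]
  refine Finset.sum_congr rfl fun i _ => ?_
  rw [integral_finset_sum _ fun j _ =>
    ((integrable_mul_of_memℒp_two (hXc i) (hYc j)).const_mul _)]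
  exact Finset.sum_congr rfl fun j _ => integral_const_mul _ _

/-- **No leakage of `W` into the learned `V̂` under uncorrelatedness.**
Let `W ⟂̸ V` be square-integrable with `Cov(W_i, V_j) = 0` and `Σ_W ≻ 0`.  Let
`Ŵ = B_W W + c₁` with `B_W` of full column rank and `V̂ = B_C W + B_V V + c₂`.  If
`Cov(Ŵ_i, V̂_j) = 0` for all `i, j`, then `B_C = 0` and hence `V̂ = B_V V + c₂`. -/
theorem leakage_matrix_eq_zero_of_uncorrelated
    {Ω : Type*} [MeasurableSpace Ω] (μ : Measure Ω) [IsProbabilityMeasure μ]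
    {p q phat qhat : ℕ}
    (W : Ω → Fin p → ℝ) (V : Ω → Fin q → ℝ)
    (hW : ∀ i, MemLp (fun ω => W ω i) 2 μ)
    (hV : ∀ j, MemLp (fun ω => V ω j) 2 μ)
    (h_uncorr : ∀ i j, cov μ (fun ω => W ω i) (fun ω => V ω j) = 0)
    (h_posdef : (Matrix.of fun i j : Fin p =>
      cov μ (fun ω => W ω i) (fun ω => W ω j)).PosDef)
    (B_W : Matrix (Fin phat) (Fin p) ℝ)
    (hB_W : ∀ v : Fin p → ℝ, B_W.mulVec v = 0 → v = 0)
    (B_C : Matrix (Fin qhat) (Fin p) ℝ) (B_V : Matrix (Fin qhat) (Fin q) ℝ)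
    (c₁ : Fin phat → ℝ) (c₂ : Fin qhat → ℝ)
    (What : Ω → Fin phat → ℝ) (Vhat : Ω → Fin qhat → ℝ)
    (hWhat : What = fun ω => B_W.mulVec (W ω) + c₁)
    (hVhat : Vhat = fun ω => B_C.mulVec (W ω) + B_V.mulVec (V ω) + c₂)
    (h_hat_uncorr : ∀ i j, cov μ (fun ω => What ω i) (fun ω => Vhat ω j) = 0) :
    B_C = 0 ∧ Vhat = fun ω => B_V.mulVec (V ω) + c₂ := by
  -- combined family indexed by `Fin p ⊕ Fin q`
  set Z : Fin p ⊕ Fin q → Ω → ℝ :=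
    Sum.elim (fun k ω => W ω k) (fun l ω => V ω l) with hZ
  have hZmem : ∀ s, MemLp (Z s) 2 μ := by
    rintro (k | l)
    · exact hW k
    · exact hV l
  set S : Matrix (Fin p) (Fin p) ℝ :=
    Matrix.of fun i j : Fin p => cov μ (fun ω => W ω i) (fun ω => W ω j) with hS
  -- the key linear-algebra identity coming from the covariance computation
  have key : ∀ j : Fin qhat, S.mulVec (B_C j) = 0 := by
    intro j
    apply hB_W
    funext i
    have h0 := h_hat_uncorr i j
    have hWi : (fun ω => What ω i) = fun ω => (∑ k, B_W i k * W ω k) + c₁ i := by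
      funext ω
      simp [hWhat, Matrix.mulVec, dotProduct]
    have hVj : (fun ω => Vhat ω j)
        = fun ω => (∑ s : Fin p ⊕ Fin q, Sum.elim (B_C j) (B_V j) s * Z s ω) + c₂ j := by
      funext ω
      simp only [hVhat, Pi.add_apply, Fintype.sum_sum_type, Sum.elim_inl, Sum.elim_inr, hZ,
        Matrix.mulVec, dotProduct]
    rw [hWi, hVj, cov_linear μ (fun k ω => W ω k) Z hW hZmem _ _ _ _] at h0
    have hsplit : ∀ k : Fin p,
        (∑ s : Fin p ⊕ Fin q, B_W i k * Sum.elim (B_C j) (B_V j) s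
          * cov μ (fun ω => W ω k) (Z s))
        = ∑ l, B_W i k * B_C j l * cov μ (fun ω => W ω k) (fun ω => W ω l) := by
      intro k
      rw [Fintype.sum_sum_type]
      simp [hZ, h_uncorr k]
    rw [Finset.sum_congr rfl (fun k _ => hsplit k)] at h0
    have : B_W.mulVec (S.mulVec (B_C j)) i
        = ∑ k, ∑ l, B_W i k * B_C j l * cov μ (fun ω => W ω k) (fun ω => W ω l) := by
      simp only [Matrix.mulVec, dotProduct, Finset.mul_sum, hS, Matrix.of_apply]
      exact Finset.sum_congr rfl fun k _ => Finset.sum_congr rfl fun l _ => by ring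
    rw [this, h0]
    simp
  have hBC : B_C = 0 := by
    ext j l
    by_contra h
    have hne : B_C j ≠ 0 := fun hz => h (by simp [hz])
    have := h_posdef.dotProduct_mulVec_pos hne
    rw [key j] at this
    simp at this
  refine ⟨hBC, ?_⟩
  funext ω
  simp [hVhat, hBC]
end

section
/- Let ε_H, ε_V, ε_W, ε_D, ε_Y be mutually independent, square-integrable, mean-zero real random variables with strictly positive variances σ_H², σ_V², σ_W², σ_D², σ_Y², and let θ ∈ ℝ. Define H := ε_H, V := H + ε_V, W := ε_W, D := V + W + H + ε_D, Y := θD + H + ε_Y, and V̂ := V + W. Define the linearly partialled-out residuals W̃ := W − (Cov(W, V̂)/Var(V̂)) V̂, D̃ := D − (Cov(D, V̂)/Var(V̂)) V̂, Ỹ := Y − (Cov(Y, V̂)/Var(V̂)) V̂. Then Cov(W̃, D̃) = −σ_H² σ_W² / (σ_H² + σ_V² + σ_W²) ≠ 0 and Cov(W̃, Ỹ) = (θ + 1) · Cov(W̃, D̃); hence the probability limit Cov(W̃, Ỹ)/Cov(W̃, D̃) of the partialled-out instrumental-variable estimator equals θ + 1, i.e., its asymptotic bias is 1. -/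
open MeasureTheory ProbabilityTheory

lemma cov_linear_s12 {Ω : Type*} [MeasurableSpace Ω] (μ : Measure Ω) [IsProbabilityMeasure μ]
    (ε : Fin 5 → Ω → ℝ) (hmeas : ∀ i, Measurable (ε i))
    (h_indep : iIndepFun ε μ)
    (hL2 : ∀ i, MemLp (ε i) 2 μ)
    (h_mean : ∀ i, ∫ ω, ε i ω ∂μ = 0)
    (a b : Fin 5 → ℝ) :
    cov μ (fun ω => ∑ i, a i * ε i ω) (fun ω => ∑ i, b i * ε i ω)
      = ∑ i, a i * b i * variance (ε i) μ := by
  have hint : ∀ i, Integrable (ε i) μ := fun i => (hL2 i).integrable one_le_two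
  have hmul : ∀ i j, Integrable (fun ω => ε i ω * ε j ω) μ := by
    intro i j
    have h1 := (hL2 i).integrable_sq
    have h2 := (hL2 j).integrable_sq
    have hb : Integrable (fun ω => (ε i ω ^ 2 + ε j ω ^ 2) / 2) μ := (h1.add h2).div_const 2
    refine hb.mono' ((hmeas i).mul (hmeas j)).aestronglyMeasurable ?_
    filter_upwards with ω
    rw [Real.norm_eq_abs]
    rcases abs_cases (ε i ω * ε j ω) with ⟨h, _⟩ | ⟨h, _⟩ <;> rw [h] <;>
      nlinarith [sq_nonneg (ε i ω - ε j ω), sq_nonneg (ε i ω + ε j ω)]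
  have hcov : ∀ i j, ∫ ω, ε i ω * ε j ω ∂μ =
      if i = j then variance (ε i) μ else 0 := by
    intro i j
    by_cases h : i = j
    · subst h
      simp only [if_pos rfl]
      have := variance_eq_sub (hL2 i)
      rw [this, h_mean i]
      simp [sq]
    · simp only [if_neg h]
      have hind := h_indep.indepFun h
      have := hind.integral_mul_eq_mul_integral (hmeas i).aestronglyMeasurable (hmeas j).aestronglyMeasurable
      simpa [h_mean i, h_mean j] using this
  have hmean_sum : ∀ c : Fin 5 → ℝ, ∫ ω, (∑ i, c i * ε i ω) ∂μ = 0 := by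
    intro c
    rw [integral_finset_sum _ (fun i _ => (hint i).const_mul (c i))]
    simp [integral_const_mul, h_mean]
  unfold cov
  rw [hmean_sum a, hmean_sum b]
  simp only [sub_zero]
  have expand : ∀ ω, (∑ i, a i * ε i ω) * (∑ j, b j * ε j ω)
      = ∑ i, ∑ j, (a i * b j) * (ε i ω * ε j ω) := by
    intro ω
    rw [Finset.sum_mul_sum]
    congr 1; funext i; congr 1; funext j; ring
  simp only [expand]
  rw [integral_finset_sum _ (fun i _ => by
    exact integrable_finset_sum _ (fun j _ => ((hmul i j).const_mul _)))]
  have : ∀ i, ∫ ω, (∑ j, (a i * b j) * (ε i ω * ε j ω)) ∂μ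
      = ∑ j, (a i * b j) * ∫ ω, ε i ω * ε j ω ∂μ := by
    intro i
    rw [integral_finset_sum _ (fun j _ => (hmul i j).const_mul _)]
    simp [integral_const_mul]
  simp only [this, hcov]
  rw [Finset.sum_congr rfl]
  intro i _
  rw [Finset.sum_eq_single i]
  · simp
  · intro j _ hj; simp [Ne.symm hj]
  · simp

/-- **Collider bias of the partialled-out IV estimator.**
With mutually independent mean-zero noises, `H = ε_H`, `V = H + ε_V`, `W = ε_W`,
`D = V + W + H + ε_D`, `Y = θ D + H + ε_Y`, and the learned representation `V̂ = V + W`,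
the linearly partialled-out residuals satisfy
`Cov(W̃, D̃) = −σ_H² σ_W² / (σ_H² + σ_V² + σ_W²) ≠ 0` and `Cov(W̃, Ỹ) = (θ+1) Cov(W̃, D̃)`;
hence the probability limit `Cov(W̃, Ỹ)/Cov(W̃, D̃)` of the PO-IV estimator equals `θ + 1`,
i.e. its asymptotic bias is `1`. -/
theorem po_iv_collider_bias
    {Ω : Type*} [MeasurableSpace Ω] (μ : Measure Ω) [IsProbabilityMeasure μ]
    (εH εV εW εD εY : Ω → ℝ)
    (hmeas : ∀ i, Measurable (![εH, εV, εW, εD, εY] i))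
    (h_indep : iIndepFun ![εH, εV, εW, εD, εY] μ)
    (hL2 : ∀ i, MemLp (![εH, εV, εW, εD, εY] i) 2 μ)
    (h_mean : ∀ i, ∫ ω, (![εH, εV, εW, εD, εY] i) ω ∂μ = 0)
    (sH2 sV2 sW2 sD2 sY2 : ℝ)
    (hsH2 : variance εH μ = sH2) (hsV2 : variance εV μ = sV2)
    (hsW2 : variance εW μ = sW2) (hsD2 : variance εD μ = sD2)
    (hsY2 : variance εY μ = sY2)
    (hsH2_pos : 0 < sH2) (hsV2_pos : 0 < sV2) (hsW2_pos : 0 < sW2)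
    (hsD2_pos : 0 < sD2) (hsY2_pos : 0 < sY2)
    (θ : ℝ)
    (H V W D Y Vhat : Ω → ℝ)
    (hH : H = εH)
    (hV : V = fun ω => H ω + εV ω)
    (hW : W = εW)
    (hD : D = fun ω => V ω + W ω + H ω + εD ω)
    (hY : Y = fun ω => θ * D ω + H ω + εY ω)
    (hVhat : Vhat = fun ω => V ω + W ω)
    (Wt Dt Yt : Ω → ℝ)
    (hWt : Wt = fun ω => W ω - (cov μ W Vhat / cov μ Vhat Vhat) * Vhat ω)
    (hDt : Dt = fun ω => D ω - (cov μ D Vhat / cov μ Vhat Vhat) * Vhat ω)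
    (hYt : Yt = fun ω => Y ω - (cov μ Y Vhat / cov μ Vhat Vhat) * Vhat ω) :
    cov μ Wt Dt = -(sH2 * sW2) / (sH2 + sV2 + sW2) ∧
    cov μ Wt Dt ≠ 0 ∧
    cov μ Wt Yt = (θ + 1) * cov μ Wt Dt ∧
    cov μ Wt Yt / cov μ Wt Dt = θ + 1 := by
  set ε : Fin 5 → Ω → ℝ := ![εH, εV, εW, εD, εY] with hε
  have key := cov_linear_s12 μ ε hmeas h_indep hL2 h_mean
  have hvar : ∀ i, variance (ε i) μ = ![sH2, sV2, sW2, sD2, sY2] i := by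
    intro i
    fin_cases i <;>
      simp [hε, hsH2, hsV2, hsW2, hsD2, hsY2]
  -- coefficient vectors
  set aW : Fin 5 → ℝ := ![0, 0, 1, 0, 0] with haW
  set aVh : Fin 5 → ℝ := ![1, 1, 1, 0, 0] with haVh
  set aD : Fin 5 → ℝ := ![2, 1, 1, 1, 0] with haD
  set aY : Fin 5 → ℝ := ![2 * θ + 1, θ, θ, θ, 1] with haY
  have hWf : W = fun ω => ∑ i, aW i * ε i ω := by
    funext ω
    simp [hW, hε, haW, Fin.sum_univ_five]
  have hVhf : Vhat = fun ω => ∑ i, aVh i * ε i ω := by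
    funext ω
    simp [hVhat, hV, hW, hH, hε, haVh, Fin.sum_univ_five]
  have hDf : D = fun ω => ∑ i, aD i * ε i ω := by
    funext ω
    simp [hD, hV, hW, hH, hε, haD, Fin.sum_univ_five]
    ring
  have hYf : Y = fun ω => ∑ i, aY i * ε i ω := by
    funext ω
    simp [hY, hD, hV, hW, hH, hε, haY, Fin.sum_univ_five]
    ring
  set S : ℝ := sH2 + sV2 + sW2 with hSdef
  have hSpos : 0 < S := by positivity
  have hSne : S ≠ 0 := ne_of_gt hSpos
  have cVV : cov μ Vhat Vhat = S := by
    rw [hVhf, key]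
    simp [Fin.sum_univ_five, haVh, hvar, hSdef]
  have cWV : cov μ W Vhat = sW2 := by
    rw [hWf, hVhf, key]
    simp [Fin.sum_univ_five, haW, haVh, hvar]
  have cDV : cov μ D Vhat = 2 * sH2 + sV2 + sW2 := by
    rw [hDf, hVhf, key]
    simp [Fin.sum_univ_five, haD, haVh, hvar]
  have cYV : cov μ Y Vhat = (2 * θ + 1) * sH2 + θ * sV2 + θ * sW2 := by
    rw [hYf, hVhf, key]
    simp [Fin.sum_univ_five, haY, haVh, hvar]
  set kW : ℝ := sW2 / S with hkW
  set kD : ℝ := (2 * sH2 + sV2 + sW2) / S with hkD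
  set kY : ℝ := ((2 * θ + 1) * sH2 + θ * sV2 + θ * sW2) / S with hkY
  have hWtf : Wt = fun ω => ∑ i, (aW i - kW * aVh i) * ε i ω := by
    funext ω
    rw [hWt, cWV, cVV, hWf, hVhf]
    simp only [Fin.sum_univ_five]
    rw [hkW]
    ring
  have hDtf : Dt = fun ω => ∑ i, (aD i - kD * aVh i) * ε i ω := by
    funext ω
    rw [hDt, cDV, cVV, hDf, hVhf]
    simp only [Fin.sum_univ_five]
    rw [hkD]
    ring
  have hYtf : Yt = fun ω => ∑ i, (aY i - kY * aVh i) * ε i ω := by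
    funext ω
    rw [hYt, cYV, cVV, hYf, hVhf]
    simp only [Fin.sum_univ_five]
    rw [hkY]
    ring
  have cWD : cov μ Wt Dt = -(sH2 * sW2) / S := by
    rw [hWtf, hDtf, key]
    simp only [Fin.sum_univ_five, haW, haVh, haD, hvar, hkW, hkD]
    simp [Matrix.cons_val_zero, Matrix.cons_val_one, Matrix.head_cons, Fin.isValue]
    field_simp
    ring
  have cWY : cov μ Wt Yt = (θ + 1) * (-(sH2 * sW2) / S) := by
    rw [hWtf, hYtf, key]
    simp only [Fin.sum_univ_five, haW, haVh, haY, hvar, hkW, hkY]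
    simp [Matrix.cons_val_zero, Matrix.cons_val_one, Matrix.head_cons, Fin.isValue]
    field_simp
    ring
  have hne : cov μ Wt Dt ≠ 0 := by
    rw [cWD]
    have : sH2 * sW2 > 0 := by positivity
    intro hcon
    rw [div_eq_zero_iff] at hcon
    rcases hcon with h | h
    · linarith
    · exact hSne h
  refine ⟨cWD, hne, ?_, ?_⟩
  · rw [cWY, cWD]
  · rw [cWY, cWD]
    field_simp
end
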